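/- Let (X,d) be a finite metric space with n points. If α ≥ n−1, then SL*(α) coincides with single linkage: θ*_α(t) = θ_SL(t) for all t ≥ 0, and consequently u*_α(x,y) = u_SL(x,y) for all x,y ∈ X. -/

import Mathlib

open Relation

def IsMetric {X : Type} (d : X → X → ℝ) : Prop :=
  (∀ x y, 0 ≤ d x y) ∧ (∀ x y, d x y = 0 ↔ x = y) ∧
  (∀ x y, d x y = d y x) ∧ (∀ x y z, d x z ≤ d x y + d y z)

def IsUltrametric {X : Type} (d : X → X → ℝ) : Prop :=
  IsMetric d ∧ ∀ x y z, d x z ≤ max (d x y) (d y z)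

/-- dimension of the Vietoris–Rips complex of `Y ⊆ X` at scale `t`:
(max cardinality of a subset of `Y` with pairwise distances ≤ t) − 1. -/
noncomputable def dimF {X : Type} (d : X → X → ℝ) (t : ℝ) (Y : Set X) : ℝ :=
  sSup { v : ℝ | ∃ S : Finset X, ↑S ⊆ Y ∧ (∀ s ∈ S, ∀ s' ∈ S, d s s' ≤ t) ∧
    v = (S.card : ℝ) - 1 }

/-- the edge condition of the graph `G_α^t` on the blocks of the partition `P`. -/
def IsEdge {X : Type} (d : X → X → ℝ) (α t : ℝ) (P : Set (Set X)) (B B' : Set X) : Prop :=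
  B ∈ P ∧ B' ∈ P ∧ B ≠ B' ∧
  (∃ x ∈ B, ∃ y ∈ B', d x y ≤ t) ∧
  (∃ S : Finset X, ↑S ⊆ B ∪ B' ∧ (∃ s ∈ S, s ∈ B) ∧ (∃ s ∈ S, s ∈ B') ∧
    (∀ s ∈ S, ∀ s' ∈ S, d s s' ≤ t) ∧
    min (dimF d t B) (dimF d t B') ≤ α * ((S.card : ℝ) - 1))

/-- `B` and `B'` lie in the same connected component of `G_α^t`. -/
def SameComp {X : Type} (d : X → X → ℝ) (α t : ℝ) (P : Set (Set X)) (B B' : Set X) : Prop :=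
  ReflTransGen (IsEdge d α t P) B B'

/-- SL(α) merging rule: merge the blocks of each connected component of `G_α^t`. -/
def mergeStep {X : Type} (d : X → X → ℝ) (α t : ℝ) (P : Set (Set X)) : Set (Set X) :=
  { C | ∃ B ∈ P, C = ⋃₀ { B' | B' ∈ P ∧ SameComp d α t P B B' } }

/-- the partition of `X` into singletons. -/
def singletons (X : Type) : Set (Set X) := { C | ∃ x : X, C = {x} }

/-- the sorted list of values taken by `d` that are at most `t`. -/
noncomputable def distVals {X : Type} [Fintype X] (d : X → X → ℝ) (t : ℝ) : List ℝ :=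
  ((Finset.image (fun p : X × X => d p.1 p.2) Finset.univ).filter (· ≤ t)).sort (· ≤ ·)

/-- the dendrogram of SL(α): fold the merging rule over the distance values ≤ t. -/
noncomputable def theta {X : Type} [Fintype X] (d : X → X → ℝ) (α : ℝ) (t : ℝ) :
    Set (Set X) :=
  (distVals d t).foldl (fun P s => mergeStep d α s P) (singletons X)

/-- the ultrametric associated to SL(α). -/
noncomputable def uAlpha {X : Type} [Fintype X] (d : X → X → ℝ) (α : ℝ) (x y : X) : ℝ :=
  sInf { t : ℝ | 0 ≤ t ∧ ∃ B ∈ theta d α t, x ∈ B ∧ y ∈ B }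

/-- `B` is a big block of its connected component `A` of `G_α^t`:
`α·#B ≥ max_{B' ∈ A} #B'`. -/
def IsBig {X : Type} (d : X → X → ℝ) (α t : ℝ) (P : Set (Set X)) (B : Set X) : Prop :=
  B ∈ P ∧ ∀ B', B' ∈ P → SameComp d α t P B B' → (B'.ncard : ℝ) ≤ α * (B.ncard : ℝ)

/-- `B, B'` lie in the same connected component of the subgraph `H_α(A)` of big blocks. -/
def HConn {X : Type} (d : X → X → ℝ) (α t : ℝ) (P : Set (Set X)) (B B' : Set X) : Prop :=
  ReflTransGen (fun C C' => IsEdge d α t P C C' ∧ IsBig d α t P C ∧ IsBig d α t P C') B B'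

/-- `B, B'` lie in the same connected component of the subgraph `S_α(A)` of small blocks. -/
def SConn {X : Type} (d : X → X → ℝ) (α t : ℝ) (P : Set (Set X)) (B B' : Set X) : Prop :=
  ReflTransGen (fun C C' => IsEdge d α t P C C' ∧ ¬ IsBig d α t P C ∧ ¬ IsBig d α t P C')
    B B'

/-- the SL*(α) relation between blocks of a common connected component `A` of `G_α^t`:
either both lie in the same component of `H_α(A)`, or `B` is big, `B'` is small,
and no big block of `A` outside the `H_α(A)`-component of `B` is adjacent to any block
of the `S_α(A)`-component of `B'`. -/
def StarRel {X : Type} (d : X → X → ℝ) (α t : ℝ) (P : Set (Set X)) (B B' : Set X) : Prop :=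
  B ∈ P ∧ B' ∈ P ∧ SameComp d α t P B B' ∧
  ((IsBig d α t P B ∧ IsBig d α t P B' ∧ HConn d α t P B B') ∨
   (IsBig d α t P B ∧ ¬ IsBig d α t P B' ∧
     ∀ D, D ∈ P → SameComp d α t P B D → IsBig d α t P D → ¬ HConn d α t P B D →
       ∀ E, E ∈ P → ¬ IsBig d α t P E → SConn d α t P B' E → ¬ IsEdge d α t P D E))

/-- SL*(α) merging rule: merge blocks according to the equivalence relation generated
by `StarRel`. -/
def mergeStepStar {X : Type} (d : X → X → ℝ) (α t : ℝ) (P : Set (Set X)) : Set (Set X) :=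
  { C | ∃ B ∈ P, C = ⋃₀ { B' | B' ∈ P ∧ EqvGen (StarRel d α t P) B B' } }

/-- the dendrogram of SL*(α). -/
noncomputable def thetaStar {X : Type} [Fintype X] (d : X → X → ℝ) (α : ℝ) (t : ℝ) :
    Set (Set X) :=
  (distVals d t).foldl (fun P s => mergeStepStar d α s P) (singletons X)

/-- the ultrametric associated to SL*(α). -/
noncomputable def uStar {X : Type} [Fintype X] (d : X → X → ℝ) (α : ℝ) (x y : X) : ℝ :=
  sInf { t : ℝ | 0 ≤ t ∧ ∃ B ∈ thetaStar d α t, x ∈ B ∧ y ∈ B }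

/-- there is a `t`-chain from `x` to `y`. -/
def HasChain {X : Type} (d : X → X → ℝ) (r : ℝ) (x y : X) : Prop :=
  ReflTransGen (fun a b => d a b ≤ r) x y

/-- the single linkage dendrogram: the partition into `t`-chain components. -/
def thetaSL {X : Type} (d : X → X → ℝ) (t : ℝ) : Set (Set X) :=
  { C | ∃ x : X, C = { y | HasChain d t x y } }

/-- the single linkage ultrametric. -/
noncomputable def uSL {X : Type} (d : X → X → ℝ) (x y : X) : ℝ :=
  sInf { r : ℝ | 0 ≤ r ∧ HasChain d r x y }

section Aux

variable {X : Type}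

lemma hasChain_mono {d : X → X → ℝ} {r s : ℝ} (h : r ≤ s) {x y : X}
    (hc : HasChain d r x y) : HasChain d s x y :=
  ReflTransGen.mono (fun _ _ hab => le_trans hab h) _ _ hc

lemma hasChain_symm {d : X → X → ℝ} (hsymm : ∀ a b, d a b = d b a) {r : ℝ} {x y : X}
    (hc : HasChain d r x y) : HasChain d r y x :=
  @Std.Symm.symm _ _ (@ReflTransGen.stdSymm _ _ ⟨fun a b hab => by rw [show d b a = d a b from hsymm b a]; exact hab⟩) _ _ hc

lemma comp_eq_of_chain {d : X → X → ℝ} (hsymm : ∀ a b, d a b = d b a) {r : ℝ} {a y : X}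
    (h : HasChain d r a y) :
    {w | HasChain d r a w} = {w | HasChain d r y w} := by
  ext w
  exact ⟨fun hw => (hasChain_symm hsymm h).trans hw, fun hw => h.trans hw⟩

lemma dimF_le [Fintype X] [Nonempty X] (d : X → X → ℝ) (t : ℝ) (Y : Set X) :
    dimF d t Y ≤ (Fintype.card X : ℝ) - 1 := by
  apply Real.sSup_le
  · rintro v ⟨S, _, _, rfl⟩
    have : (S.card : ℝ) ≤ (Fintype.card X : ℝ) := Nat.cast_le.mpr (Finset.card_le_univ S)
    linarith
  · have : 1 ≤ Fintype.card X := Fintype.card_pos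
    have : (1 : ℝ) ≤ (Fintype.card X : ℝ) := by exact_mod_cast this
    linarith

lemma isEdge_symm {d : X → X → ℝ} (hsymm : ∀ a b, d a b = d b a) {α t : ℝ}
    {P : Set (Set X)} {B B' : Set X} (h : IsEdge d α t P B B') : IsEdge d α t P B' B := by
  obtain ⟨h1, h2, h3, ⟨x, hx, y, hy, hxy⟩, S, hS, hSB, hSB', hSp, hmin⟩ := h
  exact ⟨h2, h1, h3.symm, ⟨y, hy, x, hx, by rw [hsymm]; exact hxy⟩,
    S, by rwa [Set.union_comm], hSB', hSB, hSp, by rwa [min_comm]⟩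

lemma sameComp_symm {d : X → X → ℝ} (hsymm : ∀ a b, d a b = d b a) {α t : ℝ}
    {P : Set (Set X)} {B B' : Set X} (h : SameComp d α t P B B') : SameComp d α t P B' B :=
  @Std.Symm.symm _ _ (@ReflTransGen.stdSymm _ _ ⟨fun _ _ he => isEdge_symm hsymm he⟩) _ _ h

lemma mergeStepStar_eq_self {d : X → X → ℝ} {α s : ℝ} {P : Set (Set X)}
    (hno : ∀ B B', ¬ IsEdge d α s P B B') : mergeStepStar d α s P = P := by
  have hsc : ∀ B B', SameComp d α s P B B' → B = B' := by
    intro B B' h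
    induction h with
    | refl => rfl
    | tail _ e _ => exact absurd e (hno _ _)
  have heq : ∀ B B', EqvGen (StarRel d α s P) B B' → B = B' := by
    intro B B' h
    induction h with
    | rel _ _ h => exact hsc _ _ h.2.2.1
    | refl => rfl
    | symm _ _ _ ih => exact ih.symm
    | trans _ _ _ _ _ ih1 ih2 => exact ih1.trans ih2
  have hcomp : ∀ B, B ∈ P → {B' | B' ∈ P ∧ EqvGen (StarRel d α s P) B B'} = {B} := by
    intro B hB
    ext B'
    constructor
    · rintro ⟨_, h⟩; exact (heq _ _ h).symm
    · rintro rfl; exact ⟨hB, EqvGen.refl _⟩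
  ext C
  constructor
  · rintro ⟨B, hB, rfl⟩
    rw [hcomp B hB, Set.sUnion_singleton]; exact hB
  · intro hC
    exact ⟨C, hC, by rw [hcomp C hC, Set.sUnion_singleton]⟩

lemma thetaSL_subsingleton [Fintype X] (h : Fintype.card X ≤ 1) (d : X → X → ℝ)
    (r r' : ℝ) : thetaSL d r = thetaSL d r' := by
  have hsub : Subsingleton X := Fintype.card_le_one_iff_subsingleton.mp h
  have hset : ∀ (ρ : ℝ) (a : X), {w | HasChain d ρ a w} = Set.univ := by
    intro ρ a
    ext w
    simp only [Set.mem_setOf_eq, Set.mem_univ, iff_true]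
    rw [Subsingleton.elim w a]
    exact ReflTransGen.refl
  ext C
  constructor
  · rintro ⟨a, rfl⟩; exact ⟨a, by rw [hset, hset]⟩
  · rintro ⟨a, rfl⟩; exact ⟨a, by rw [hset, hset]⟩

/-- The key merging step: SL*(α) applied at scale `s` to the single linkage partition
at scale `s₀` gives the single linkage partition at scale `max s₀ s`. -/
lemma mergeStepStar_thetaSL [Fintype X] {d : X → X → ℝ} (hd : IsMetric d)
    {α : ℝ} (hα : 0 < α) (hn : (Fintype.card X : ℝ) - 1 ≤ α) (s₀ s : ℝ) :
    mergeStepStar d α s (thetaSL d s₀) = thetaSL d (max s₀ s) := by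
  classical
  obtain ⟨hpos, hzero, hsymm, _⟩ := hd
  set P := thetaSL d s₀ with hP
  rcases lt_or_ge s s₀ with hlt | hle
  · rw [max_eq_left hlt.le]
    apply mergeStepStar_eq_self
    rintro B B' ⟨hB, hB', hne, ⟨x, hx, y, hy, hxy⟩, -⟩
    obtain ⟨a, rfl⟩ := hB
    obtain ⟨b, rfl⟩ := hB'
    apply hne
    have hax : HasChain d s₀ a x := hx
    have hby : HasChain d s₀ b y := hy
    have hxy' : HasChain d s₀ x y := ReflTransGen.single (le_trans hxy hlt.le)
    rw [comp_eq_of_chain hsymm (hax.trans hxy'), comp_eq_of_chain hsymm hby]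
  · rw [max_eq_right hle]
    rcases le_or_gt (Fintype.card X) 1 with hcard | hcard
    · rw [mergeStepStar_eq_self, hP]
      · exact thetaSL_subsingleton hcard d s₀ s
      · have hsub : Subsingleton X := Fintype.card_le_one_iff_subsingleton.mp hcard
        rintro B B' ⟨hB, hB', hne, -⟩
        obtain ⟨a, rfl⟩ := hB
        obtain ⟨b, rfl⟩ := hB'
        exact hne (by rw [Subsingleton.elim a b])
    · -- now `Fintype.card X ≥ 2`, hence `α ≥ 1`
      have hne' : Nonempty X := Fintype.card_pos_iff.mp (by omega)
      have h1 : (1 : ℝ) ≤ α := by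
        have : (2 : ℝ) ≤ (Fintype.card X : ℝ) := by exact_mod_cast hcard
        linarith
      -- every block is big
      have hcardle : ∀ B B', B ∈ P → B' ∈ P → (B'.ncard : ℝ) ≤ α * B.ncard := by
        intro B B' hB hB'
        obtain ⟨a, rfl⟩ := hB
        obtain ⟨b, rfl⟩ := hB'
        have ha : a ∈ {w | HasChain d s₀ a w} := ReflTransGen.refl
        have hb : b ∈ {w | HasChain d s₀ b w} := ReflTransGen.refl
        have hBpos : 0 < ({w | HasChain d s₀ a w} : Set X).ncard :=
          (Set.ncard_pos (Set.toFinite _)).mpr ⟨a, ha⟩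
        have hBpos' : (1 : ℝ) ≤ (({w | HasChain d s₀ a w} : Set X).ncard : ℝ) := by
          exact_mod_cast hBpos
        by_cases heq : ({w | HasChain d s₀ a w} : Set X) = {w | HasChain d s₀ b w}
        · rw [← heq]; nlinarith
        · have hdisj : Disjoint ({w | HasChain d s₀ a w} : Set X) {w | HasChain d s₀ b w} := by
            rw [Set.disjoint_left]
            intro y hy hy'
            exact heq ((comp_eq_of_chain hsymm (hy : HasChain d s₀ a y)).trans
              (comp_eq_of_chain hsymm (hy' : HasChain d s₀ b y)).symm)
          have hsum : ({w | HasChain d s₀ a w} : Set X).ncard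
              + ({w | HasChain d s₀ b w} : Set X).ncard ≤ Fintype.card X := by
            rw [← Set.ncard_union_eq hdisj (Set.toFinite _) (Set.toFinite _)]
            calc _ ≤ (Set.univ : Set X).ncard :=
                  Set.ncard_le_ncard (Set.subset_univ _) (Set.toFinite _)
              _ = Fintype.card X := by rw [Set.ncard_univ, Nat.card_eq_fintype_card]
          have hsum' : (({w | HasChain d s₀ a w} : Set X).ncard : ℝ)
              + (({w | HasChain d s₀ b w} : Set X).ncard : ℝ) ≤ (Fintype.card X : ℝ) := by
            exact_mod_cast hsum
          nlinarith
      have hbig : ∀ B, B ∈ P → IsBig d α s P B :=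
        fun B hB => ⟨hB, fun B' hB' _ => hcardle B B' hB hB'⟩
      have hHconn : ∀ B B', SameComp d α s P B B' → HConn d α s P B B' := by
        intro B B' h
        induction h with
        | refl => exact ReflTransGen.refl
        | tail _ e ih => exact ih.tail ⟨e, hbig _ e.1, hbig _ e.2.1⟩
      have hstar : ∀ B B', B ∈ P → B' ∈ P → SameComp d α s P B B' →
          StarRel d α s P B B' := fun B B' hB hB' hsc =>
        ⟨hB, hB', hsc, Or.inl ⟨hbig _ hB, hbig _ hB', hHconn _ _ hsc⟩⟩
      have heqv : ∀ B B', EqvGen (StarRel d α s P) B B' →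
          B = B' ∨ (B ∈ P ∧ B' ∈ P ∧ SameComp d α s P B B') := by
        intro B B' h
        induction h with
        | rel _ _ h => exact Or.inr ⟨h.1, h.2.1, h.2.2.1⟩
        | refl => exact Or.inl rfl
        | symm _ _ _ ih =>
          rcases ih with rfl | ⟨h1, h2, h3⟩
          · exact Or.inl rfl
          · exact Or.inr ⟨h2, h1, sameComp_symm hsymm h3⟩
        | trans _ _ _ _ _ ih1 ih2 =>
          rcases ih1 with rfl | ⟨h1, h2, h3⟩
          · exact ih2
          · rcases ih2 with rfl | ⟨h4, h5, h6⟩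
            · exact Or.inr ⟨h1, h2, h3⟩
            · exact Or.inr ⟨h1, h5, h3.trans h6⟩
      have hcompset : ∀ B, B ∈ P →
          {B' | B' ∈ P ∧ EqvGen (StarRel d α s P) B B'}
            = {B' | B' ∈ P ∧ SameComp d α s P B B'} := by
        intro B hB
        ext B'
        simp only [Set.mem_setOf_eq]
        constructor
        · rintro ⟨hB', h⟩
          refine ⟨hB', ?_⟩
          rcases heqv _ _ h with rfl | ⟨_, _, h⟩
          · exact ReflTransGen.refl
          · exact h
        · rintro ⟨hB', h⟩
          exact ⟨hB', EqvGen.rel _ _ (hstar _ _ hB hB' h)⟩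
      -- key computation of unions of connected components
      have hE : ∀ a : X,
          ⋃₀ {B' | B' ∈ P ∧ SameComp d α s P {w | HasChain d s₀ a w} B'}
            = {w | HasChain d s a w} := by
        intro a
        apply Set.Subset.antisymm
        · intro y hy
          rw [Set.mem_sUnion] at hy
          obtain ⟨B', ⟨hB', hsc⟩, hyB'⟩ := hy
          have claim : ∀ B', SameComp d α s P {w | HasChain d s₀ a w} B' →
              ∀ y ∈ B', HasChain d s a y := by
            intro B' h
            induction h with
            | refl => exact fun y hy => hasChain_mono hle hy
            | tail _ e ih =>
              intro y hy
              obtain ⟨x', hx', y', hy', hxy'⟩ := e.2.2.2.1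
              obtain ⟨z, rfl⟩ := e.2.1
              exact (((ih x' hx').tail hxy').trans
                (hasChain_mono hle ((hasChain_symm hsymm hy').trans hy)))
          exact claim B' hsc y hyB'
        · intro y hy
          simp only [Set.mem_setOf_eq] at hy
          induction hy with
          | refl =>
            exact Set.mem_sUnion.mpr ⟨{w | HasChain d s₀ a w},
              ⟨⟨a, rfl⟩, ReflTransGen.refl⟩, ReflTransGen.refl⟩
          | @tail b c _ hbc ih =>
            obtain ⟨B', ⟨hB', hsc⟩, hbB'⟩ := Set.mem_sUnion.mp ih
            by_cases hmem : c ∈ B'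
            · exact Set.mem_sUnion.mpr ⟨B', ⟨hB', hsc⟩, hmem⟩
            · have hbc' : b ≠ c := fun h => hmem (h ▸ hbB')
              have hCc : ({w | HasChain d s₀ c w} : Set X) ∈ P := ⟨c, rfl⟩
              have hedge : IsEdge d α s P B' {w | HasChain d s₀ c w} := by
                refine ⟨hB', hCc, ?_, ⟨b, hbB', c, ReflTransGen.refl, hbc⟩,
                  {b, c}, ?_, ⟨b, ?_, hbB'⟩, ⟨c, ?_, ReflTransGen.refl⟩, ?_, ?_⟩
                · intro h; exact hmem (h ▸ (ReflTransGen.refl : HasChain d s₀ c c))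
                · intro w hw
                  simp only [Finset.coe_insert, Finset.coe_singleton, Set.mem_insert_iff,
                    Set.mem_singleton_iff] at hw
                  rcases hw with rfl | rfl
                  · exact Or.inl hbB'
                  · exact Or.inr ReflTransGen.refl
                · simp
                · simp
                · intro s1 hs1 s2 hs2
                  simp only [Finset.mem_insert, Finset.mem_singleton] at hs1 hs2
                  have h0s : (0 : ℝ) ≤ s := le_trans (hpos b c) hbc
                  rcases hs1 with rfl | rfl <;> rcases hs2 with rfl | rfl
                  · rw [(hzero _ _).mpr rfl]; exact h0s
                  · exact hbc
                  · rw [hsymm]; exact hbc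
                  · rw [(hzero _ _).mpr rfl]; exact h0s
                · have hc2 : (({b, c} : Finset X).card : ℝ) - 1 = 1 := by
                    rw [Finset.card_pair hbc']; norm_num
                  rw [hc2, mul_one]
                  calc min (dimF d s B') (dimF d s {w | HasChain d s₀ c w})
                      ≤ dimF d s B' := min_le_left _ _
                    _ ≤ (Fintype.card X : ℝ) - 1 := dimF_le d s B'
                    _ ≤ α := hn
              exact Set.mem_sUnion.mpr ⟨{w | HasChain d s₀ c w},
                ⟨hCc, hsc.tail hedge⟩, ReflTransGen.refl⟩
      -- conclude
      ext C
      constructor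
      · rintro ⟨B, hB, rfl⟩
        obtain ⟨a, ha⟩ := hB
        subst ha
        rw [hcompset _ ⟨a, rfl⟩, hE a]
        exact ⟨a, rfl⟩
      · rintro ⟨a, rfl⟩
        exact ⟨{w | HasChain d s₀ a w}, ⟨a, rfl⟩, by rw [hcompset _ ⟨a, rfl⟩, hE a]⟩

lemma foldl_mergeStepStar [Fintype X] {d : X → X → ℝ} (hd : IsMetric d)
    {α : ℝ} (hα : 0 < α) (hn : (Fintype.card X : ℝ) - 1 ≤ α) :
    ∀ (L : List ℝ) (s₀ : ℝ),
      L.foldl (fun P s => mergeStepStar d α s P) (thetaSL d s₀)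
        = thetaSL d (L.foldl max s₀)
  | [], s₀ => rfl
  | (s :: L), s₀ => by
    rw [List.foldl_cons, mergeStepStar_thetaSL hd hα hn s₀ s, List.foldl_cons,
      foldl_mergeStepStar hd hα hn L (max s₀ s)]

lemma singletons_eq_thetaSL_zero {d : X → X → ℝ} (hd : IsMetric d) :
    singletons X = thetaSL d 0 := by
  have h0 : ∀ x y : X, HasChain d 0 x y → x = y := by
    intro x y h
    induction h with
    | refl => rfl
    | tail _ e ih =>
      exact ih.trans ((hd.2.1 _ _).mp (le_antisymm e (hd.1 _ _)))
  have hset : ∀ x : X, ({y | HasChain d 0 x y} : Set X) = {x} := by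
    intro x
    ext y
    simp only [Set.mem_setOf_eq, Set.mem_singleton_iff]
    exact ⟨fun h => (h0 x y h).symm, fun h => h ▸ ReflTransGen.refl⟩
  ext C
  constructor
  · rintro ⟨x, rfl⟩; exact ⟨x, (hset x).symm⟩
  · rintro ⟨x, rfl⟩; exact ⟨x, hset x⟩

lemma le_foldl_max : ∀ (L : List ℝ) (b : ℝ), b ≤ L.foldl max b
  | [], _ => le_refl _
  | (a :: L), b => le_trans (le_max_left b a) (le_foldl_max L (max b a))

lemma mem_le_foldl_max : ∀ (L : List ℝ) (b x : ℝ), x ∈ L → x ≤ L.foldl max b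
  | (a :: L), b, x, h => by
    rcases List.mem_cons.mp h with rfl | h
    · exact le_trans (le_max_right b x) (le_foldl_max L (max b x))
    · exact mem_le_foldl_max L (max b a) x h

lemma foldl_max_le : ∀ (L : List ℝ) (b c : ℝ), b ≤ c → (∀ x ∈ L, x ≤ c) →
    L.foldl max b ≤ c
  | [], _, _, hb, _ => hb
  | (a :: L), b, c, hb, h => by
    exact foldl_max_le L (max b a) c (max_le hb (h a (List.mem_cons_self (a := a) (l := L))))
      (fun x hx => h x (List.mem_cons_of_mem a hx))

lemma mem_distVals [Fintype X] {d : X → X → ℝ} {t : ℝ} (a b : X) (h : d a b ≤ t) :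
    d a b ∈ distVals d t := by
  unfold distVals
  rw [Finset.mem_sort, Finset.mem_filter, Finset.mem_image]
  exact ⟨⟨(a, b), Finset.mem_univ _, rfl⟩, h⟩

end Aux

theorem SLstar_eq_SL_of_large_alpha {X : Type} [Fintype X] (d : X → X → ℝ)
    (hd : IsMetric d) (α : ℝ) (hα : 0 < α)
    (hn : (Fintype.card X : ℝ) - 1 ≤ α) :
    (∀ t : ℝ, 0 ≤ t → thetaStar d α t = thetaSL d t) ∧
    (∀ x y, uStar d α x y = uSL d x y) := by
  have hsymm : ∀ a b, d a b = d b a := hd.2.2.1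
  have hpart1 : ∀ t : ℝ, 0 ≤ t → thetaStar d α t = thetaSL d t := by
    intro t ht
    have hstep : thetaStar d α t = thetaSL d ((distVals d t).foldl max 0) := by
      unfold thetaStar
      rw [singletons_eq_thetaSL_zero hd]
      exact foldl_mergeStepStar hd hα hn (distVals d t) 0
    rw [hstep]
    set M := (distVals d t).foldl max 0 with hM
    have hMt : M ≤ t := by
      apply foldl_max_le _ _ _ ht
      intro x hx
      unfold distVals at hx
      rw [Finset.mem_sort, Finset.mem_filter] at hx
      exact hx.2
    have hdM : ∀ a b : X, d a b ≤ t → d a b ≤ M :=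
      fun a b h => mem_le_foldl_max _ 0 _ (mem_distVals a b h)
    ext C
    constructor
    · rintro ⟨a, rfl⟩
      refine ⟨a, ?_⟩
      ext w
      simp only [Set.mem_setOf_eq]
      exact ⟨fun h => hasChain_mono hMt h,
        fun h => ReflTransGen.mono (fun x y hxy => hdM x y hxy) _ _ h⟩
    · rintro ⟨a, rfl⟩
      refine ⟨a, ?_⟩
      ext w
      simp only [Set.mem_setOf_eq]
      exact ⟨fun h => ReflTransGen.mono (fun x y hxy => hdM x y hxy) _ _ h,
        fun h => hasChain_mono hMt h⟩
  refine ⟨hpart1, ?_⟩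
  intro x y
  unfold uStar uSL
  congr 1
  ext r
  simp only [Set.mem_setOf_eq]
  constructor
  · rintro ⟨hr, B, hB, hx, hy⟩
    refine ⟨hr, ?_⟩
    rw [hpart1 r hr] at hB
    obtain ⟨z, rfl⟩ := hB
    exact (hasChain_symm hsymm hx).trans hy
  · rintro ⟨hr, hch⟩
    refine ⟨hr, {w | HasChain d r x w}, ?_, ReflTransGen.refl, hch⟩
    rw [hpart1 r hr]
    exact ⟨x, rfl⟩
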